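/- Let σ, β > 0 with σ > β + 1, set ρ_c = σ(σ + β + 3)/(σ − β − 1) and ω = √(β(σ + ρ_c)). Then the complex number iω is a root of the polynomial X³ + (σ + β + 1)X² + β(σ + ρ_c)X + 2σβ(ρ_c − 1), i.e., the characteristic polynomial of the Jacobian of the Lorenz system at the nontrivial equilibria C± has a purely imaginary pair of roots ±iω at ρ = ρ_c. Moreover, ρ_c is the unique ρ ∈ ℝ for which (σ + β + 1)·β(σ + ρ) = 2σβ(ρ − 1), i.e., the unique parameter value at which this crossing occurs. -/

import Mathlib

theorem lorenz_hopf_critical_parameter (σ β : ℝ) (hσ : 0 < σ) (hβ : 0 < β)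
    (h : β + 1 < σ) :
    let ρc : ℝ := σ * (σ + β + 3) / (σ - β - 1)
    let ω : ℝ := Real.sqrt (β * (σ + ρc))
    ((Complex.I * ω) ^ 3 + ((σ : ℂ) + β + 1) * (Complex.I * ω) ^ 2 +
        (β * (σ + ρc) : ℝ) * (Complex.I * ω) + (2 * σ * β * (ρc - 1) : ℝ) = 0) ∧
    ((-(Complex.I * ω)) ^ 3 + ((σ : ℂ) + β + 1) * (-(Complex.I * ω)) ^ 2 +
        (β * (σ + ρc) : ℝ) * (-(Complex.I * ω)) + (2 * σ * β * (ρc - 1) : ℝ) = 0) ∧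
    (∀ ρ : ℝ, (σ + β + 1) * (β * (σ + ρ)) = 2 * σ * β * (ρ - 1) ↔ ρ = ρc) := by
  intro ρc ω
  have hden : 0 < σ - β - 1 := by linarith
  have hρc : 0 < ρc := by
    have : 0 < σ * (σ + β + 3) := by positivity
    exact div_pos this hden
  have hω2 : ω ^ 2 = β * (σ + ρc) := Real.sq_sqrt (by positivity)
  have key : (σ + β + 1) * (β * (σ + ρc)) = 2 * σ * β * (ρc - 1) := by
    have hρc' : ρc * (σ - β - 1) = σ * (σ + β + 3) := by
      exact div_mul_cancel₀ _ hden.ne'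
    nlinarith [hρc']
  have hw2 : ((ω : ℂ)) ^ 2 = ((β * (σ + ρc) : ℝ) : ℂ) := by
    push_cast
    exact_mod_cast hω2
  have keyc : ((σ : ℂ) + β + 1) * ((β * (σ + ρc) : ℝ) : ℂ)
      = ((2 * σ * β * (ρc - 1) : ℝ) : ℂ) := by
    push_cast
    have hk := congrArg Complex.ofReal key
    push_cast at hk ⊢
    linear_combination hk
  refine ⟨?_, ?_, ?_⟩
  · linear_combination (Complex.I * (ω:ℂ)^3 + ((σ:ℂ)+β+1) * (ω:ℂ)^2) * Complex.I_sq
      + (-(Complex.I * (ω:ℂ)) - ((σ:ℂ)+β+1)) * hw2 - keyc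
  · linear_combination (-(Complex.I * (ω:ℂ)^3) + ((σ:ℂ)+β+1) * (ω:ℂ)^2) * Complex.I_sq
      + ((Complex.I * (ω:ℂ)) - ((σ:ℂ)+β+1)) * hw2 - keyc
  · intro ρ
    constructor
    · intro hρ
      have : ρ * (σ - β - 1) = σ * (σ + β + 3) := by nlinarith [hρ]
      rw [show ρc = σ * (σ + β + 3) / (σ - β - 1) from rfl, eq_div_iff hden.ne']
      linarith [this]
    · rintro rfl
      exact key
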